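/- Let S be a countable set, p₁ and q₁ probability mass functions on S with the same support, and γ₁ = q₁/p₁ > 0 on the support. Let D ≥ 1, σ > 0, x₂ ∈ ℝ^D, Δ ∈ ℝ^D with r := ‖Δ‖₂ > 0. Let w be the product of p₁ and the D-fold product of Gaussians N((x₂)ᵢ, σ²), and v the product of q₁ and the D-fold product of Gaussians N((x₂ + Δ)ᵢ, σ²). Define γ(z₁,z₂) = γ₁(z₁)·exp(σ⁻²·Δᵀ(z₂ − x₂) − r²/(2σ²)). Fix p_A ∈ (0,1), let t* > 0 be the unique solution of Σ_{z₁} p₁(z₁)·Φ((r²/2 + σ²(log t* − log γ₁(z₁)))/(σr)) = p_A, and set h*(z₁,z₂) = 1{γ(z₁,z₂) ≤ t*}. Then ∫ h* dw = p_A and ∫ h* dv = Σ_{z₁} q₁(z₁)·Φ((r²/2 + σ²(log t* − log γ₁(z₁)))/(σr) − r/σ), where Φ is the standard normal CDF. -/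

import Mathlib

open MeasureTheory ProbabilityTheory

/-- The standard normal cumulative distribution function `Φ`. -/
noncomputable def stdNormalCDF (t : ℝ) : ℝ :=
  ((gaussianReal 0 1) (Set.Iic t)).toReal

/-- The discrete measure on a countable set with mass function `p`. -/
noncomputable def discreteMeasure {S : Type*} [MeasurableSpace S] (p : S → ℝ) :
    Measure S :=
  Measure.sum (fun z => ENNReal.ofReal (p z) • Measure.dirac z)

open Real
open scoped NNReal ENNReal

section Aux

lemma pdf_conv (v₁ v₂ : ℝ≥0) (h₁ : v₁ ≠ 0) (h₂ : v₂ ≠ 0) (u x : ℝ) :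
    gaussianPDFReal 0 v₁ x * gaussianPDFReal 0 v₂ (u - x)
      = gaussianPDFReal 0 (v₁ + v₂) u
        * gaussianPDFReal ((v₁ : ℝ) * u / ((v₁ : ℝ) + (v₂ : ℝ))) (v₁ * v₂ / (v₁ + v₂)) x := by
  have ha : (0:ℝ) < v₁ := NNReal.coe_pos.mpr (pos_iff_ne_zero.mpr h₁)
  have hb : (0:ℝ) < v₂ := NNReal.coe_pos.mpr (pos_iff_ne_zero.mpr h₂)
  have hab : (0:ℝ) < (v₁:ℝ) + v₂ := by linarith
  have ha' := ha.ne'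
  have hb' := hb.ne'
  have hab' := hab.ne'
  simp only [gaussianPDFReal, sub_zero, NNReal.coe_add, NNReal.coe_div, NNReal.coe_mul]
  rw [mul_mul_mul_comm, mul_mul_mul_comm ((√(2 * π * ((v₁:ℝ)+(v₂:ℝ))))⁻¹)]
  congr 1
  · rw [← mul_inv, ← mul_inv, ← Real.sqrt_mul (by positivity), ← Real.sqrt_mul (by positivity)]
    congr 2
    field_simp
  · rw [← Real.exp_add, ← Real.exp_add]
    congr 1
    field_simp
    ring

lemma gaussian_conv_centered (v₁ v₂ : ℝ≥0) :
    Measure.map (fun p : ℝ × ℝ => p.1 + p.2)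
      ((gaussianReal 0 v₁).prod (gaussianReal 0 v₂)) = gaussianReal 0 (v₁ + v₂) := by
  by_cases h₁ : v₁ = 0
  · subst h₁
    rw [gaussianReal_zero_var, Measure.dirac_prod,
      Measure.map_map (by fun_prop) (by fun_prop)]
    simp [Function.comp_def]
  by_cases h₂ : v₂ = 0
  · subst h₂
    rw [gaussianReal_zero_var, Measure.prod_dirac,
      Measure.map_map (by fun_prop) (by fun_prop)]
    simp [Function.comp_def]
  -- main case
  have hadd : Measurable (fun p : ℝ × ℝ => p.1 + p.2) := by fun_prop
  haveI : IsProbabilityMeasure (Measure.map (fun p : ℝ × ℝ => p.1 + p.2)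
      ((gaussianReal 0 v₁).prod (gaussianReal 0 v₂))) :=
    Measure.isProbabilityMeasure_map hadd.aemeasurable
  have haux : v₁ * v₂ / (v₁ + v₂) ≠ 0 := by
    simp only [ne_eq, div_eq_zero_iff, mul_eq_zero, add_eq_zero, not_or]
    tauto
  refine Measure.ext_of_Iic _ _ (fun t => ?_)
  rw [Measure.map_apply hadd measurableSet_Iic]
  have hpre : (fun p : ℝ × ℝ => p.1 + p.2) ⁻¹' (Set.Iic t) = {p : ℝ × ℝ | p.1 + p.2 ≤ t} := rfl
  rw [hpre, Measure.prod_apply (by exact hadd measurableSet_Iic)]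
  have hsec : ∀ x : ℝ, (Prod.mk x ⁻¹' {p : ℝ × ℝ | p.1 + p.2 ≤ t}) = Set.Iic (t - x) := by
    intro x; ext y; simp only [Set.mem_preimage, Set.mem_setOf_eq, Set.mem_Iic]
    constructor <;> intro <;> linarith
  simp_rw [hsec]
  rw [gaussianReal_of_var_ne_zero 0 h₁]
  have hmono : Measurable (fun s : ℝ => (gaussianReal 0 v₂) (Set.Iic s)) :=
    Monotone.measurable (fun a b hab => measure_mono (Set.Iic_subset_Iic.mpr hab))
  have hG : Measurable (fun x : ℝ => (gaussianReal 0 v₂) (Set.Iic (t - x))) :=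
    hmono.comp (measurable_const.sub measurable_id)
  rw [lintegral_withDensity_eq_lintegral_mul _ (measurable_gaussianPDF 0 v₁) hG]
  have htrans : ∀ x : ℝ, (gaussianReal 0 v₂) (Set.Iic (t - x))
      = ∫⁻ u, (Set.Iic t).indicator (fun u => gaussianPDF 0 v₂ (u - x)) u := by
    intro x
    have h1 : Measure.map (⇑(MeasurableEquiv.addRight x)) (volume : Measure ℝ) = volume := by
      rw [MeasurableEquiv.coe_addRight]; exact map_add_right_eq_self volume x
    calc (gaussianReal 0 v₂) (Set.Iic (t - x))
        = ∫⁻ y, (Set.Iic (t - x)).indicator (gaussianPDF 0 v₂) y := by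
          rw [gaussianReal_apply 0 h₂, lintegral_indicator measurableSet_Iic]
      _ = ∫⁻ y, (Set.Iic t).indicator (fun u => gaussianPDF 0 v₂ (u - x))
            ((MeasurableEquiv.addRight x) y) := by
          refine lintegral_congr fun y => ?_
          have hcoe : (MeasurableEquiv.addRight x) y = y + x := rfl
          rw [hcoe]
          by_cases hy : y ∈ Set.Iic (t - x)
          · rw [Set.indicator_of_mem hy,
              Set.indicator_of_mem (by simp only [Set.mem_Iic] at hy ⊢; linarith)]
            simp
          · rw [Set.indicator_of_notMem hy,
              Set.indicator_of_notMem (by simp only [Set.mem_Iic] at hy ⊢; linarith)]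
      _ = ∫⁻ u, (Set.Iic t).indicator (fun u => gaussianPDF 0 v₂ (u - x)) u := by
          rw [← lintegral_map_equiv _ (MeasurableEquiv.addRight x), h1]
  simp only [Pi.mul_apply]
  simp_rw [htrans]
  have key : ∀ u x : ℝ, u ∈ Set.Iic t → gaussianPDF 0 v₁ x * gaussianPDF 0 v₂ (u - x)
      = ENNReal.ofReal (gaussianPDFReal 0 (v₁ + v₂) u)
        * gaussianPDF ((v₁ : ℝ) * u / ((v₁ : ℝ) + (v₂ : ℝ))) (v₁ * v₂ / (v₁ + v₂)) x := by
    intro u x _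
    rw [gaussianPDF, gaussianPDF, gaussianPDF,
      ← ENNReal.ofReal_mul (gaussianPDFReal_nonneg _ _ _),
      ← ENNReal.ofReal_mul (gaussianPDFReal_nonneg _ _ _), pdf_conv v₁ v₂ h₁ h₂ u x]
  calc ∫⁻ x, gaussianPDF 0 v₁ x
        * ∫⁻ u, (Set.Iic t).indicator (fun u => gaussianPDF 0 v₂ (u - x)) u
      = ∫⁻ x, ∫⁻ u, gaussianPDF 0 v₁ x
          * (Set.Iic t).indicator (fun u => gaussianPDF 0 v₂ (u - x)) u := by
        refine lintegral_congr fun x => (lintegral_const_mul _ ?_).symm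
        exact Measurable.indicator
          ((measurable_gaussianPDF 0 v₂).comp (measurable_id.sub measurable_const))
          measurableSet_Iic
    _ = ∫⁻ u, ∫⁻ x, gaussianPDF 0 v₁ x
          * (Set.Iic t).indicator (fun u => gaussianPDF 0 v₂ (u - x)) u := by
        refine lintegral_lintegral_swap ?_
        refine Measurable.aemeasurable ?_
        have : (Function.uncurry fun x u => gaussianPDF 0 v₁ x
            * (Set.Iic t).indicator (fun u => gaussianPDF 0 v₂ (u - x)) u)
            = fun p : ℝ × ℝ => gaussianPDF 0 v₁ p.1
              * if p.2 ∈ Set.Iic t then gaussianPDF 0 v₂ (p.2 - p.1) else 0 := by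
          ext p; simp [Function.uncurry, Set.indicator_apply]
        rw [this]
        refine ((measurable_gaussianPDF 0 v₁).comp measurable_fst).mul ?_
        refine Measurable.ite ?_ ?_ measurable_const
        · exact measurable_snd measurableSet_Iic
        · exact (measurable_gaussianPDF 0 v₂).comp (measurable_snd.sub measurable_fst)
    _ = ∫⁻ u, (Set.Iic t).indicator (gaussianPDF 0 (v₁ + v₂)) u := by
        refine lintegral_congr fun u => ?_
        by_cases hu : u ∈ Set.Iic t
        · rw [Set.indicator_of_mem hu]
          simp_rw [fun x => Set.indicator_of_mem hu (fun u => gaussianPDF 0 v₂ (u - x)),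
            fun x => key u x hu]
          rw [lintegral_const_mul _ (measurable_gaussianPDF _ _),
            lintegral_gaussianPDF_eq_one _ haux, mul_one, gaussianPDF]
        · rw [Set.indicator_of_notMem hu]
          simp_rw [fun x => Set.indicator_of_notMem hu (fun u => gaussianPDF 0 v₂ (u - x)),
            mul_zero, lintegral_zero]
    _ = (gaussianReal 0 (v₁ + v₂)) (Set.Iic t) := by
        rw [lintegral_indicator measurableSet_Iic,
          ← gaussianReal_apply 0 (by simp [h₁]) (Set.Iic t)]

lemma gaussian_conv (m₁ m₂ : ℝ) (v₁ v₂ : ℝ≥0) :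
    Measure.map (fun p : ℝ × ℝ => p.1 + p.2)
      ((gaussianReal m₁ v₁).prod (gaussianReal m₂ v₂)) = gaussianReal (m₁ + m₂) (v₁ + v₂) := by
  have h₁ : gaussianReal m₁ v₁ = (gaussianReal 0 v₁).map (· + m₁) := by
    rw [gaussianReal_map_add_const, zero_add]
  have h₂ : gaussianReal m₂ v₂ = (gaussianReal 0 v₂).map (· + m₂) := by
    rw [gaussianReal_map_add_const, zero_add]
  rw [h₁, h₂, Measure.map_prod_map (f := (· + m₁)) (g := (· + m₂)) _ _ (by fun_prop) (by fun_prop),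
    Measure.map_map (by fun_prop) (by fun_prop)]
  have : ((fun p : ℝ × ℝ => p.1 + p.2) ∘ Prod.map (· + m₁) (· + m₂))
      = (· + (m₁ + m₂)) ∘ (fun p : ℝ × ℝ => p.1 + p.2) := by
    ext p; simp [Function.comp, Prod.map]; ring
  rw [this, ← Measure.map_map (f := fun p : ℝ × ℝ => p.1 + p.2) (g := (· + (m₁ + m₂)))
    (by fun_prop) (by fun_prop), gaussian_conv_centered, gaussianReal_map_add_const, zero_add]

lemma pi_gauss_dot (n : ℕ) (m Δ : Fin n → ℝ) (s : ℝ≥0) :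
    Measure.map (fun z : Fin n → ℝ => ∑ i, Δ i * z i)
      (Measure.pi fun i => gaussianReal (m i) s)
    = gaussianReal (∑ i, Δ i * m i) (∑ i, ((Δ i) ^ 2).toNNReal * s) := by
  induction n with
  | zero =>
      have h0 : (fun z : Fin 0 → ℝ => ∑ i, Δ i * z i) = fun _ => (0:ℝ) := by
        ext z; simp
      rw [h0, Measure.map_const]
      simp [gaussianReal_zero_var]
  | succ n ih =>
      set e := MeasurableEquiv.piFinSuccAbove (fun _ : Fin (n+1) => ℝ) 0 with he
      have hmp := MeasureTheory.measurePreserving_piFinSuccAbove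
        (fun i : Fin (n+1) => gaussianReal (m i) s) 0
      have hmape : Measure.map e (Measure.pi fun i => gaussianReal (m i) s)
          = (gaussianReal (m 0) s).prod
            (Measure.pi fun j : Fin n => gaussianReal (m j.succ) s) := by
        rw [hmp.map_eq]
        simp [Fin.succAbove_zero]
      have hTe : (fun z : Fin (n+1) → ℝ => ∑ i, Δ i * z i)
          = (fun p : ℝ × (Fin n → ℝ) => Δ 0 * p.1 + ∑ j, Δ j.succ * p.2 j) ∘ e := by
        ext z
        simp [he, MeasurableEquiv.piFinSuccAbove, Fin.sum_univ_succ, Fin.succAbove_zero, Fin.tail]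
      rw [hTe, ← Measure.map_map (by fun_prop) e.measurable, hmape]
      have hT : (fun p : ℝ × (Fin n → ℝ) => Δ 0 * p.1 + ∑ j, Δ j.succ * p.2 j)
          = (fun p : ℝ × ℝ => p.1 + p.2)
            ∘ Prod.map (fun a : ℝ => Δ 0 * a) (fun z : Fin n → ℝ => ∑ j, Δ j.succ * z j) := by
        ext p; simp [Prod.map]
      rw [hT, ← Measure.map_map (by fun_prop)
        ((show Measurable (fun a : ℝ => Δ 0 * a) by fun_prop).prodMap (by fun_prop)),
        ← Measure.map_prod_map _ _ (show Measurable (fun a : ℝ => Δ 0 * a) by fun_prop) (by fun_prop),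
        gaussianReal_map_const_mul,
        ih (fun j => m j.succ) (fun j => Δ j.succ), gaussian_conv]
      congr 1
      · rw [Fin.sum_univ_succ]
      · rw [Fin.sum_univ_succ]
        congr 1
        congr 1
        ext
        simp [Real.coe_toNNReal _ (sq_nonneg (Δ 0))]

lemma gaussianReal_Iic_toReal (mμ : ℝ) (v : ℝ≥0) (hv : v ≠ 0) (t : ℝ) :
    ((gaussianReal mμ v) (Set.Iic t)).toReal = stdNormalCDF ((t - mμ) / Real.sqrt v) := by
  have hvpos : (0:ℝ) < v := NNReal.coe_pos.mpr (pos_iff_ne_zero.mpr hv)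
  have hc : (0:ℝ) < Real.sqrt v := Real.sqrt_pos.mpr hvpos
  have h1 : gaussianReal mμ v = ((gaussianReal 0 1).map (Real.sqrt v * ·)).map (· + mμ) := by
    rw [gaussianReal_map_const_mul, mul_zero, gaussianReal_map_add_const, zero_add]
    congr 1
    ext
    simp [Real.sq_sqrt v.coe_nonneg]
  rw [h1, Measure.map_map (by fun_prop) (by fun_prop),
    Measure.map_apply (by fun_prop) measurableSet_Iic]
  have hpre : ((· + mμ) ∘ (Real.sqrt v * ·)) ⁻¹' (Set.Iic t)
      = Set.Iic ((t - mμ) / Real.sqrt v) := by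
    ext x
    simp only [Set.mem_preimage, Function.comp_apply, Set.mem_Iic, le_div_iff₀ hc]
    constructor <;> intro <;> linarith [mul_comm x (Real.sqrt v)]
  rw [hpre, stdNormalCDF]

lemma section_eval (D : ℕ) (σ : ℝ) (hσ : 0 < σ) (x₂ Δ : Fin D → ℝ) (r : ℝ)
    (hr : r = Real.sqrt (∑ i, Δ i ^ 2)) (hr0 : 0 < r)
    (tstar : ℝ) (htstar : 0 < tstar) (γ : ℝ) (hγ : 0 < γ) (mvec : Fin D → ℝ) :
    ((Measure.pi fun i => gaussianReal (mvec i) ((σ ^ 2).toNNReal))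
      {z₂ : Fin D → ℝ |
        γ * Real.exp ((∑ i, Δ i * (z₂ i - x₂ i)) / σ ^ 2 - r ^ 2 / (2 * σ ^ 2)) ≤ tstar}).toReal
    = stdNormalCDF ((∑ i, Δ i * x₂ i + σ ^ 2 * (Real.log tstar - Real.log γ) + r ^ 2 / 2
        - ∑ i, Δ i * mvec i) / (σ * r)) := by
  have hσ2 : (0:ℝ) < σ ^ 2 := by positivity
  have hr2 : r ^ 2 = ∑ i, Δ i ^ 2 := by
    rw [hr, Real.sq_sqrt]; positivity
  set C : ℝ := ∑ i, Δ i * x₂ i + σ ^ 2 * (Real.log tstar - Real.log γ) + r ^ 2 / 2 with hC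
  have hset : {z₂ : Fin D → ℝ |
        γ * Real.exp ((∑ i, Δ i * (z₂ i - x₂ i)) / σ ^ 2 - r ^ 2 / (2 * σ ^ 2)) ≤ tstar}
      = (fun z : Fin D → ℝ => ∑ i, Δ i * z i) ⁻¹' (Set.Iic C) := by
    ext z₂
    simp only [Set.mem_setOf_eq, Set.mem_preimage, Set.mem_Iic]
    rw [mul_comm, ← le_div_iff₀ hγ, ← Real.le_log_iff_exp_le (div_pos htstar hγ),
      Real.log_div htstar.ne' hγ.ne']
    have hsum : ∑ i, Δ i * (z₂ i - x₂ i) = (∑ i, Δ i * z₂ i) - ∑ i, Δ i * x₂ i := by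
      rw [← Finset.sum_sub_distrib]; congr 1; ext i; ring
    rw [hsum, sub_le_iff_le_add, div_le_iff₀ hσ2]
    have hk : (Real.log tstar - Real.log γ + r ^ 2 / (2 * σ ^ 2)) * σ ^ 2
        = σ ^ 2 * (Real.log tstar - Real.log γ) + r ^ 2 / 2 := by
      field_simp
    rw [hk, hC]
    constructor <;> intro h <;> linarith
  have hdot : Measurable (fun z : Fin D → ℝ => ∑ i, Δ i * z i) :=
    Finset.measurable_sum _ (fun i _ => by fun_prop)
  have hVr : ((∑ i, ((Δ i) ^ 2).toNNReal * ((σ ^ 2).toNNReal : ℝ≥0) : ℝ≥0) : ℝ)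
      = (σ * r) ^ 2 := by
    rw [NNReal.coe_sum]
    have hterm : ∀ i, (((Δ i ^ 2).toNNReal * ((σ ^ 2).toNNReal : ℝ≥0) : ℝ≥0) : ℝ)
        = Δ i ^ 2 * σ ^ 2 := by
      intro i
      rw [NNReal.coe_mul, Real.coe_toNNReal _ (sq_nonneg _), Real.coe_toNNReal _ (sq_nonneg _)]
    simp_rw [hterm]
    rw [← Finset.sum_mul, ← hr2]
    ring
  have hVne : (∑ i, ((Δ i) ^ 2).toNNReal * ((σ ^ 2).toNNReal : ℝ≥0) : ℝ≥0) ≠ 0 := by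
    intro h0
    have h1 := hVr
    rw [h0] at h1
    simp only [NNReal.coe_zero] at h1
    nlinarith [mul_pos hσ hr0]
  rw [hset, ← Measure.map_apply hdot measurableSet_Iic, pi_gauss_dot,
    gaussianReal_Iic_toReal _ _ hVne, hVr, Real.sqrt_sq (by positivity)]

lemma integral_indicator_discrete_prod {S : Type*} [Countable S] [MeasurableSpace S]
    [MeasurableSingletonClass S] (p : S → ℝ) (hp : ∀ z, 0 ≤ p z)
    {E : Type*} [MeasurableSpace E] (ν : Measure E) [IsProbabilityMeasure ν]
    (A : Set (S × E)) (hA : MeasurableSet A) :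
    ∫ q, A.indicator (fun _ => (1:ℝ)) q ∂((discreteMeasure p).prod ν)
      = ∑' z, p z * (ν (Prod.mk z ⁻¹' A)).toReal := by
  have h1 : ∫ q, A.indicator (fun _ => (1:ℝ)) q ∂((discreteMeasure p).prod ν)
      = (((discreteMeasure p).prod ν) A).toReal := integral_indicator_one hA
  rw [h1, Measure.prod_apply hA]
  rw [show discreteMeasure p = Measure.sum (fun z => ENNReal.ofReal (p z) • Measure.dirac z)
    from rfl, lintegral_sum_measure]
  simp_rw [lintegral_smul_measure, lintegral_dirac, smul_eq_mul]
  rw [ENNReal.tsum_toReal_eq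
    (fun z => ENNReal.mul_ne_top ENNReal.ofReal_ne_top (measure_ne_top ν _))]
  exact tsum_congr fun z => by rw [ENNReal.toReal_mul, ENNReal.toReal_ofReal (hp z)]

end Aux

/-- **Achievability part of the hybrid randomized smoothing certificate.**
With clean distribution `w = p₁ ⊗ N(x₂, σ²I_D)`, adversarial distribution
`v = q₁ ⊗ N(x₂+Δ, σ²I_D)`, joint likelihood ratio
`γ(z₁,z₂) = (q₁/p₁)(z₁)·exp(σ⁻²Δᵀ(z₂−x₂) − r²/(2σ²))`, and `t* > 0` solving the
capacity equation `Σ_{z₁} p₁(z₁)·Φ((r²/2 + σ²(log t* − log γ₁(z₁)))/(σr)) = p_A`, the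
threshold test `h* = 1{γ ≤ t*}` satisfies `∫ h* dw = p_A` and
`∫ h* dv = Σ_{z₁} q₁(z₁)·Φ((r²/2 + σ²(log t* − log γ₁(z₁)))/(σr) − r/σ)`. -/
theorem hybrid_certificate_achievability
    {S : Type*} [Countable S] [MeasurableSpace S] [MeasurableSingletonClass S]
    (p₁ q₁ : S → ℝ)
    (hp₁nn : ∀ z, 0 ≤ p₁ z) (hp₁sum : ∑' z, p₁ z = 1)
    (hq₁nn : ∀ z, 0 ≤ q₁ z) (hq₁sum : ∑' z, q₁ z = 1)
    (hsupp : ∀ z, 0 < p₁ z ↔ 0 < q₁ z)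
    (γ₁ : S → ℝ) (hγ₁def : γ₁ = fun z => q₁ z / p₁ z)
    (D : ℕ) (hD : 1 ≤ D) (σ : ℝ) (hσ : 0 < σ)
    (x₂ Δ : Fin D → ℝ)
    (r : ℝ) (hr : r = Real.sqrt (∑ i, Δ i ^ 2)) (hr0 : 0 < r)
    (w v : Measure (S × (Fin D → ℝ)))
    (hw : w = (discreteMeasure p₁).prod
      (Measure.pi (fun i => gaussianReal (x₂ i) ⟨σ ^ 2, sq_nonneg σ⟩)))
    (hv : v = (discreteMeasure q₁).prod
      (Measure.pi (fun i => gaussianReal (x₂ i + Δ i) ⟨σ ^ 2, sq_nonneg σ⟩)))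
    (pA : ℝ) (hpA : pA ∈ Set.Ioo (0 : ℝ) 1)
    (tstar : ℝ) (htstar : 0 < tstar)
    (hcapacity : ∑' z₁, p₁ z₁ *
      stdNormalCDF ((r ^ 2 / 2 + σ ^ 2 * (Real.log tstar - Real.log (γ₁ z₁))) / (σ * r))
        = pA)
    (hstar : S × (Fin D → ℝ) → ℝ)
    (hstar_def : hstar = Set.indicator
      {q : S × (Fin D → ℝ) |
        γ₁ q.1 * Real.exp ((∑ i, Δ i * (q.2 i - x₂ i)) / σ ^ 2 - r ^ 2 / (2 * σ ^ 2))
          ≤ tstar}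
      (fun _ => (1 : ℝ))) :
    (∫ q, hstar q ∂w = pA) ∧
      ∫ q, hstar q ∂v
        = ∑' z₁, q₁ z₁ *
            stdNormalCDF
              ((r ^ 2 / 2 + σ ^ 2 * (Real.log tstar - Real.log (γ₁ z₁))) / (σ * r)
                - r / σ) := by
  have hgv : ∀ mi : ℝ, gaussianReal mi ⟨σ ^ 2, sq_nonneg σ⟩
      = gaussianReal mi ((σ ^ 2).toNNReal) := by
    intro mi; congr 1; ext; simp [Real.coe_toNNReal _ (sq_nonneg σ)]; rfl
  have hr2 : r ^ 2 = ∑ i, Δ i ^ 2 := by rw [hr, Real.sq_sqrt]; positivity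
  have hA : MeasurableSet {q : S × (Fin D → ℝ) |
      γ₁ q.1 * Real.exp ((∑ i, Δ i * (q.2 i - x₂ i)) / σ ^ 2 - r ^ 2 / (2 * σ ^ 2)) ≤ tstar} := by
    have hmeas : Measurable (fun q : S × (Fin D → ℝ) =>
        γ₁ q.1 * Real.exp ((∑ i, Δ i * (q.2 i - x₂ i)) / σ ^ 2 - r ^ 2 / (2 * σ ^ 2))) := by
      refine Measurable.mul ((measurable_of_countable γ₁).comp measurable_fst) ?_
      refine Real.continuous_exp.measurable.comp ?_
      refine Measurable.sub_const (Measurable.div_const ?_ _) _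
      exact Finset.measurable_sum _ (fun i _ => by fun_prop)
    exact measurableSet_le hmeas measurable_const
  constructor
  · rw [hw, hstar_def]
    simp only [hgv]
    rw [integral_indicator_discrete_prod p₁ hp₁nn _ _ hA, ← hcapacity]
    refine tsum_congr fun z => ?_
    by_cases hz : p₁ z = 0
    · simp [hz]
    · have hpz : 0 < p₁ z := lt_of_le_of_ne (hp₁nn z) (Ne.symm hz)
      have hqz : 0 < q₁ z := (hsupp z).mp hpz
      have hγz : 0 < γ₁ z := by rw [hγ₁def]; exact div_pos hqz hpz
      congr 1
      have hsect : (Prod.mk z ⁻¹' {q : S × (Fin D → ℝ) |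
          γ₁ q.1 * Real.exp ((∑ i, Δ i * (q.2 i - x₂ i)) / σ ^ 2 - r ^ 2 / (2 * σ ^ 2)) ≤ tstar})
          = {z₂ : Fin D → ℝ |
            γ₁ z * Real.exp ((∑ i, Δ i * (z₂ i - x₂ i)) / σ ^ 2 - r ^ 2 / (2 * σ ^ 2)) ≤ tstar} :=
        rfl
      rw [hsect, section_eval D σ hσ x₂ Δ r hr hr0 tstar htstar (γ₁ z) hγz x₂]
      congr 1
      ring
  · rw [hv, hstar_def]
    simp only [hgv]
    rw [integral_indicator_discrete_prod q₁ hq₁nn _ _ hA]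
    refine tsum_congr fun z => ?_
    by_cases hz : q₁ z = 0
    · simp [hz]
    · have hqz : 0 < q₁ z := lt_of_le_of_ne (hq₁nn z) (Ne.symm hz)
      have hpz : 0 < p₁ z := (hsupp z).mpr hqz
      have hγz : 0 < γ₁ z := by rw [hγ₁def]; exact div_pos hqz hpz
      congr 1
      have hsect : (Prod.mk z ⁻¹' {q : S × (Fin D → ℝ) |
          γ₁ q.1 * Real.exp ((∑ i, Δ i * (q.2 i - x₂ i)) / σ ^ 2 - r ^ 2 / (2 * σ ^ 2)) ≤ tstar})
          = {z₂ : Fin D → ℝ |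
            γ₁ z * Real.exp ((∑ i, Δ i * (z₂ i - x₂ i)) / σ ^ 2 - r ^ 2 / (2 * σ ^ 2)) ≤ tstar} :=
        rfl
      rw [hsect,
        section_eval D σ hσ x₂ Δ r hr hr0 tstar htstar (γ₁ z) hγz (fun i => x₂ i + Δ i)]
      have hsum2 : ∑ i, Δ i * (x₂ i + Δ i) = (∑ i, Δ i * x₂ i) + r ^ 2 := by
        rw [hr2, ← Finset.sum_add_distrib]
        congr 1; ext i; ring
      rw [hsum2]
      congr 1
      have hσ' := hσ.ne'
      have hr' := hr0.ne'
      field_simp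
      ring
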